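/- Let M = [[A, b],[cᵀ, 0]] where A is an invertible Z-matrix with A⁻¹ ≤ 0 and b, c ∈ ℝⁿ are nonpositive with b ≠ 0. Then M is an R₀-matrix: the only x ∈ ℝⁿ⁺¹ with x ≥ 0 and Mx ≥ 0 and xᵀMx = 0 is x = 0. In fact x ≥ 0 and Mx ≥ 0 already force x = 0. -/

import Mathlib

open Matrix

/-- For `M = [[A, b],[cᵀ, 0]]` with `A` an invertible Z-matrix, `A⁻¹ ≤ 0`,
`b, c ≤ 0`, `b ≠ 0`: `M` is an R₀-matrix; in fact `x ≥ 0` and `Mx ≥ 0`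
already force `x = 0`. -/
theorem stmt_9 (n : ℕ) (A : Matrix (Fin n) (Fin n) ℝ)
    (hAZ : ∀ i j, i ≠ j → A i j ≤ 0)
    (hAinv : IsUnit A.det)
    (hAneg : ∀ i j, A⁻¹ i j ≤ 0)
    (b c : Fin n → ℝ) (hb : ∀ i, b i ≤ 0) (hc : ∀ i, c i ≤ 0) (hbne : b ≠ 0)
    (M : Matrix (Fin n ⊕ Fin 1) (Fin n ⊕ Fin 1) ℝ)
    (hM : M = Matrix.fromBlocks A (fun i _ => b i) (fun _ j => c j) 0) :
    (∀ x : Fin n ⊕ Fin 1 → ℝ, (∀ i, 0 ≤ x i) → (∀ i, 0 ≤ (M *ᵥ x) i) →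
      x ⬝ᵥ (M *ᵥ x) = 0 → x = 0) ∧
    (∀ x : Fin n ⊕ Fin 1 → ℝ, (∀ i, 0 ≤ x i) → (∀ i, 0 ≤ (M *ᵥ x) i) → x = 0) := by
  have key : ∀ x : Fin n ⊕ Fin 1 → ℝ, (∀ i, 0 ≤ x i) → (∀ i, 0 ≤ (M *ᵥ x) i) → x = 0 := by
    intro x hx hMx
    set u : Fin n → ℝ := fun i => x (Sum.inl i) with hu
    have ht : 0 ≤ x (Sum.inr 0) := hx _
    have hrow : ∀ i, 0 ≤ (A *ᵥ u) i + b i * x (Sum.inr 0) := by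
      intro i
      have h := hMx (Sum.inl i)
      rw [hM] at h
      simpa [mulVec, dotProduct, Fintype.sum_sum_type, fromBlocks, Fin.sum_univ_one, hu] using h
    have hAu : ∀ i, 0 ≤ (A *ᵥ u) i := by
      intro i
      have hb' : b i * x (Sum.inr 0) ≤ 0 :=
        mul_nonpos_of_nonpos_of_nonneg (hb i) ht
      linarith [hrow i]
    have hrepr : u = A⁻¹ *ᵥ (A *ᵥ u) := by
      rw [mulVec_mulVec, nonsing_inv_mul A hAinv, one_mulVec]
    have hule : ∀ i, u i ≤ 0 := by
      intro i
      rw [hrepr]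
      simp only [mulVec, dotProduct]
      apply Finset.sum_nonpos
      intro j _
      exact mul_nonpos_of_nonpos_of_nonneg (hAneg i j) (hAu j)
    have hu0 : u = 0 := funext fun i => le_antisymm (hule i) (hx _)
    have hAu0 : A *ᵥ u = 0 := by rw [hu0, mulVec_zero]
    obtain ⟨j, hj⟩ : ∃ j, b j ≠ 0 := by
      by_contra h; push_neg at h; exact hbne (funext h)
    have hbj : b j < 0 := lt_of_le_of_ne (hb j) hj
    have ht0 : x (Sum.inr 0) = 0 := by
      have h := hrow j
      rw [hAu0] at h
      simp only [Pi.zero_apply, zero_add] at h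
      nlinarith
    funext i
    cases i with
    | inl i => exact congrFun hu0 i
    | inr i =>
      have : i = 0 := Subsingleton.elim _ _
      rw [this]; exact ht0
  exact ⟨fun x hx hMx _ => key x hx hMx, key⟩
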